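/- For every f ∈ K_{s+t}(φ,M) and every subset I ⊆ {1,…,n} with #I = s there is a unique decomposition f = a_I + e_I.b_I with a_I ∈ K_{s+t}(φ,M) and b_I ∈ K_t(φ,M) such that no e_J with J ⊇ I appears in a_I and no e_T with T ∩ I ≠ ∅ appears in b_I. With this notation: (a) Σ_I e_I.b_I = C(s+t, s)·f, the sum over all subsets I ⊆ {1,…,n} with #I = s; (b) if f ∈ Z_{s+t}(φ,M), then b_I ∈ Z_t(φ,M) for every such I. -/

import Mathlib

open Finset

section Koszul

variable {R : Type} [CommRing R] {ι : Type} [Fintype ι] [LinearOrder ι]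

/-- The Koszul differential on `⋀ F ⊗ M`, modelled as `Finset ι → M`, for the Koszul
complex of the family `u : ι → R` with coefficients in `M`. -/
noncomputable def kD (u : ι → R) (M : Type) [AddCommGroup M] [Module R M] :
    (Finset ι → M) →ₗ[R] (Finset ι → M) where
  toFun f := fun J => ∑ i ∈ Jᶜ, ((-1 : ℤ) ^ (J.filter (· < i)).card) • u i • f (insert i J)
  map_add' f g := by
    funext J
    simp [smul_add, Finset.sum_add_distrib]
  map_smul' r f := by
    funext J
    simp only [Pi.smul_apply, RingHom.id_apply]
    rw [Finset.smul_sum]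
    refine Finset.sum_congr rfl fun i _ => ?_
    rw [smul_comm (u i) r, smul_comm ((-1 : ℤ) ^ (J.filter (· < i)).card) r]

variable (u : ι → R) (M : Type) [AddCommGroup M] [Module R M]

/-- The homological degree `t` part `K_t` of the Koszul complex, i.e. the elements
supported on subsets of cardinality `t`. -/
def kSupp (t : ℕ) : Submodule R (Finset ι → M) where
  carrier := {f | ∀ J : Finset ι, J.card ≠ t → f J = 0}
  add_mem' := by
    intro f g hf hg J hJ
    simp [Pi.add_apply, hf J hJ, hg J hJ]
  zero_mem' := by intro J hJ; rfl
  smul_mem' := by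
    intro c f hf J hJ
    simp [Pi.smul_apply, hf J hJ]

/-- Koszul cycles `Z_t(u, M)`. -/
noncomputable def kZ (t : ℕ) : Submodule R (Finset ι → M) :=
  kSupp M t ⊓ LinearMap.ker (kD u M)

/-- Koszul boundaries `B_t(u, M)`. -/
noncomputable def kB (t : ℕ) : Submodule R (Finset ι → M) :=
  kSupp M t ⊓ Submodule.map (kD u M) (kSupp M (t + 1))

/-- The sign `σ(A,B) = (-1)^{#{(a,b) ∈ A×B : a > b}}`. -/
def ksign (A B : Finset ι) : ℤ := (-1) ^ ((A ×ˢ B).filter fun p => p.2 < p.1).card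

/-- The multiplication `K(u,R) ⊗ K(u,M) → K(u,M)` of the Koszul complex, viewed as a module
over the exterior algebra. -/
def kMul (a : Finset ι → R) (f : Finset ι → M) : Finset ι → M :=
  fun J => ∑ A ∈ J.powerset, ksign A (J \ A) • a A • f (J \ A)

/-- The identity element of the Koszul algebra `K(u,R)`. -/
def kOne : Finset ι → R := fun J => if J = ∅ then 1 else 0

/-- Iterated Koszul product of a list of elements of `K(u,R)`. -/
def kProd (l : List (Finset ι → R)) : Finset ι → R := l.foldr (kMul R) kOne

end Koszul


section Stmt16

variable {R : Type} [CommRing R] {ι : Type} [Fintype ι] [LinearOrder ι]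
variable (u : ι → R) (M : Type) [AddCommGroup M] [Module R M]

/-- The basis element `e_I` of the Koszul algebra `K(φ,R) = ⋀ F`. -/
def kBasis (I : Finset ι) : Finset ι → R := fun J => if J = I then 1 else 0

/-- The property that `(a, b)` is the canonical decomposition `f = a + e_I.b` where
`a ∈ K_{s+t}(φ,M)`, `b ∈ K_t(φ,M)`, no `e_J` with `J ⊇ I` appears in `a`, and no `e_T`
with `T ∩ I ≠ ∅` appears in `b`. -/
def IsDecomposition (s t : ℕ) (f : Finset ι → M) (I : Finset ι)
    (ab : (Finset ι → M) × (Finset ι → M)) : Prop :=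
  ab.1 ∈ kSupp (R := R) M (s + t) ∧ ab.2 ∈ kSupp (R := R) M t ∧
    f = ab.1 + kMul (R := R) M (kBasis I) ab.2 ∧
    (∀ J : Finset ι, I ⊆ J → ab.1 J = 0) ∧
    (∀ T : Finset ι, ¬Disjoint T I → ab.2 T = 0)

section Aux

variable {M}

lemma kD_apply (f : Finset ι → M) (J : Finset ι) :
    kD u M f J = ∑ i ∈ Jᶜ, ((-1 : ℤ) ^ (J.filter (· < i)).card) • u i • f (insert i J) := rfl

lemma kMul_kBasis (b : Finset ι → M) (I J : Finset ι) :
    kMul (R := R) M (kBasis I) b J =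
      if I ⊆ J then ksign I (J \ I) • b (J \ I) else 0 := by
  have h : ∀ A ∈ J.powerset,
      ksign A (J \ A) • kBasis (R := R) I A • b (J \ A)
        = if A = I then ksign A (J \ A) • b (J \ A) else 0 := by
    intro A _
    by_cases h : A = I <;> simp [kBasis, h]
  rw [kMul, Finset.sum_congr rfl h, Finset.sum_ite_eq' J.powerset I
        (fun A => ksign A (J \ A) • b (J \ A))]
  simp [Finset.mem_powerset]

lemma ksign_sq_smul (I T : Finset ι) (m : M) : ksign I T • ksign I T • m = m := by
  rw [smul_smul, ksign, ← pow_add, Even.neg_one_pow ⟨_, rfl⟩, one_smul]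

/-- The canonical `a` component. -/
def ka (f : Finset ι → M) (I : Finset ι) : Finset ι → M :=
  fun J => if I ⊆ J then 0 else f J

/-- The canonical `b` component. -/
def kb (f : Finset ι → M) (I : Finset ι) : Finset ι → M :=
  fun T => if Disjoint T I then ksign I T • f (I ∪ T) else 0

lemma isDecomposition_ka_kb (s t : ℕ) (f : Finset ι → M)
    (hf : f ∈ kSupp (R := R) M (s + t)) (I : Finset ι) (hI : I.card = s) :
    IsDecomposition (R := R) M s t f I (ka f I, kb f I) := by
  refine ⟨?_, ?_, ?_, ?_, ?_⟩
  · intro J hJ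
    by_cases h : I ⊆ J <;> simp [ka, h, hf J hJ]
  · intro T hT
    by_cases h : Disjoint T I
    · have : f (I ∪ T) = 0 := by
        apply hf
        rw [Finset.card_union_of_disjoint h.symm, hI]
        omega
      simp [kb, h, this]
    · simp [kb, h]
  · funext J
    rw [Pi.add_apply, kMul_kBasis]
    by_cases h : I ⊆ J
    · rw [if_pos h]
      have : kb f I (J \ I) = ksign I (J \ I) • f (I ∪ (J \ I)) := by
        rw [kb, if_pos Finset.sdiff_disjoint]
      show f J = ka f I J + ksign I (J \ I) • kb f I (J \ I)
      rw [this, Finset.union_sdiff_of_subset h, ksign_sq_smul, ka, if_pos h, zero_add]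
    · rw [if_neg h]
      show f J = ka f I J + (0 : M)
      rw [ka, if_neg h, add_zero]
  · intro J h
    simp [ka, h]
  · intro T h
    simp [kb, h]

lemma snd_eq_kb (s t : ℕ) (f : Finset ι → M) (I : Finset ι)
    (ab : (Finset ι → M) × (Finset ι → M))
    (hab : IsDecomposition (R := R) M s t f I ab) : ab.2 = kb f I := by
  obtain ⟨_, _, heq, ha, hb⟩ := hab
  funext T
  by_cases hd : Disjoint T I
  · have hJ := congrFun heq (I ∪ T)
    rw [Pi.add_apply, kMul_kBasis, if_pos Finset.subset_union_left,
        ha _ Finset.subset_union_left, zero_add,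
        Finset.union_sdiff_cancel_left hd.symm] at hJ
    have : kb f I T = ksign I T • f (I ∪ T) := by rw [kb, if_pos hd]
    rw [this, hJ, ksign_sq_smul]
  · rw [hb T hd, kb, if_neg hd]

lemma ksign_eq_sum (A B : Finset ι) :
    ksign A B = (-1) ^ ∑ a ∈ A, (B.filter (· < a)).card := by
  rw [ksign]
  congr 1
  rw [Finset.card_filter, Finset.sum_product]
  exact Finset.sum_congr rfl fun a _ => (Finset.card_filter _ _).symm

lemma ksign_insert (I T : Finset ι) (i : ι) (hiT : i ∉ T) :
    ksign I (insert i T) = (-1) ^ (I.filter (fun a => i < a)).card * ksign I T := by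
  rw [ksign_eq_sum, ksign_eq_sum, ← pow_add]
  congr 1
  rw [Finset.card_filter, ← Finset.sum_add_distrib]
  refine Finset.sum_congr rfl fun a _ => ?_
  rw [Finset.filter_insert]
  by_cases h : i < a
  · rw [if_pos h, if_pos h,
      Finset.card_insert_of_notMem (fun hm => hiT (Finset.mem_filter.1 hm).1)]
    omega
  · rw [if_neg h, if_neg h, zero_add]

lemma sign_identity (I T : Finset ι) (i : ι) (hiI : i ∉ I) (hiT : i ∉ T)
    (hd : Disjoint T I) :
    ((-1 : ℤ) ^ (T.filter (· < i)).card) * ksign I (insert i T)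
      = ((-1) ^ I.card * ksign I T) * (-1) ^ (((I ∪ T).filter (· < i)).card) := by
  have hB : ((I ∪ T).filter (· < i)).card
      = (I.filter (· < i)).card + (T.filter (· < i)).card := by
    rw [Finset.filter_union, Finset.card_union_of_disjoint
      (hd.symm.mono (Finset.filter_subset _ _) (Finset.filter_subset _ _))]
  have hC : (I.filter (· < i)).card + (I.filter (fun a => i < a)).card = I.card := by
    rw [← Finset.card_filter_add_card_filter_not (s := I) (p := (· < i))]
    congr 2
    apply Finset.filter_congr
    intro a ha
    simp only [not_lt]
    constructor
    · intro h; exact h.le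
    · intro h; exact lt_of_le_of_ne h (fun he => hiI (he ▸ ha))
  rw [ksign_insert I T i hiT, hB, ← hC, pow_add, pow_add]
  have h1 : ((-1 : ℤ) ^ (I.filter (· < i)).card) * (-1) ^ (I.filter (· < i)).card = 1 := by
    rw [← pow_add]; exact Even.neg_one_pow ⟨_, rfl⟩
  linear_combination (-((-1 : ℤ) ^ (T.filter (· < i)).card
    * (-1) ^ (I.filter (fun a => i < a)).card * ksign I T)) * h1

lemma kD_kb (f : Finset ι → M) (I : Finset ι) (hfD : kD u M f = 0) :
    kD u M (kb f I) = 0 := by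
  funext T
  rw [kD_apply, Pi.zero_apply]
  by_cases hd : Disjoint T I
  · have hsub : (I ∪ T)ᶜ ⊆ Tᶜ :=
      Finset.compl_subset_compl.mpr Finset.subset_union_right
    have hzero : ∀ i ∈ Tᶜ, i ∉ (I ∪ T)ᶜ →
        ((-1 : ℤ) ^ (T.filter (· < i)).card) • u i • kb f I (insert i T) = 0 := by
      intro i hi hni
      have hiI : i ∈ I := by
        rcases Finset.mem_union.1 (Finset.notMem_compl.1 hni) with h | h
        · exact h
        · exact absurd h (Finset.mem_compl.1 hi)
      have : kb f I (insert i T) = 0 := by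
        rw [kb, if_neg]
        intro h
        exact (Finset.disjoint_left.1 h (Finset.mem_insert_self i T)) hiI
      rw [this, smul_zero, smul_zero]
    rw [← Finset.sum_subset hsub hzero]
    have hterm : ∀ i ∈ (I ∪ T)ᶜ,
        ((-1 : ℤ) ^ (T.filter (· < i)).card) • u i • kb f I (insert i T)
          = ((-1 : ℤ) ^ I.card * ksign I T) •
            (((-1 : ℤ) ^ (((I ∪ T).filter (· < i)).card)) • u i • f (insert i (I ∪ T))) := by
      intro i hi
      have hiIT := Finset.mem_compl.1 hi
      have hiI : i ∉ I := fun h => hiIT (Finset.mem_union_left _ h)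
      have hiT : i ∉ T := fun h => hiIT (Finset.mem_union_right _ h)
      have hkb : kb f I (insert i T) = ksign I (insert i T) • f (insert i (I ∪ T)) := by
        rw [kb, if_pos (Finset.disjoint_insert_left.2 ⟨hiI, hd⟩), Finset.union_insert]
      rw [hkb, smul_comm (u i) (ksign I (insert i T)), smul_smul,
        sign_identity I T i hiI hiT hd, ← smul_smul, ← smul_smul]
    rw [Finset.sum_congr rfl hterm, ← Finset.smul_sum, ← kD_apply u f (I ∪ T), hfD,
      Pi.zero_apply, smul_zero]
  · apply Finset.sum_eq_zero
    intro i _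
    have : kb f I (insert i T) = 0 := by
      rw [kb, if_neg]
      intro h
      exact hd (h.mono_left (Finset.subset_insert i T))
    rw [this, smul_zero, smul_zero]

end Aux

/-- For every `f ∈ K_{s+t}(φ,M)` and every `I ⊆ {1,…,n}` with `#I = s` there is a unique
decomposition `f = a_I + e_I.b_I` as above; moreover
(a) `Σ_I e_I.b_I = C(s+t,s)·f`, the sum being over all `I` with `#I = s`; and
(b) if `f ∈ Z_{s+t}(φ,M)` then `b_I ∈ Z_t(φ,M)` for every such `I`. -/
theorem koszul_decomposition (s t : ℕ) (f : Finset ι → M) (hf : f ∈ kSupp (R := R) M (s + t)) :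
    (∀ I : Finset ι, I.card = s →
      ∃! ab : (Finset ι → M) × (Finset ι → M), IsDecomposition (R := R) M s t f I ab) ∧
    (∀ a b : Finset ι → Finset ι → M,
      (∀ I : Finset ι, I.card = s → IsDecomposition (R := R) M s t f I (a I, b I)) →
      ((∑ I ∈ Finset.univ.filter (fun I : Finset ι => I.card = s),
          kMul (R := R) M (kBasis I) (b I)) = ((s + t).choose s : ℕ) • f) ∧
      (f ∈ kZ u M (s + t) → ∀ I : Finset ι, I.card = s → b I ∈ kZ u M t)) := by
  constructor
  · intro I hI
    have hex := isDecomposition_ka_kb (R := R) s t f hf I hI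
    refine ⟨(ka f I, kb f I), hex, fun ab hab => ?_⟩
    have h2 : ab.2 = kb f I := snd_eq_kb s t f I ab hab
    have h1 : ab.1 = ka f I := by
      have e1 := hab.2.2.1
      have e2 := hex.2.2.1
      rw [h2] at e1
      exact add_right_cancel (e1.symm.trans e2)
    exact Prod.ext h1 h2
  · intro a b hab
    constructor
    · funext J
      rw [Finset.sum_apply]
      have key : ∀ I ∈ Finset.univ.filter (fun I : Finset ι => I.card = s),
          kMul (R := R) M (kBasis I) (b I) J = if I ⊆ J then f J else 0 := by
        intro I hIm
        have hI : I.card = s := (Finset.mem_filter.1 hIm).2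
        rw [kMul_kBasis]
        by_cases h : I ⊆ J
        · rw [if_pos h, if_pos h]
          have heq := congrFun (hab I hI).2.2.1 J
          rw [Pi.add_apply, (hab I hI).2.2.2.1 J h, zero_add, kMul_kBasis, if_pos h] at heq
          exact heq.symm
        · rw [if_neg h, if_neg h]
      rw [Finset.sum_congr rfl key, ← Finset.sum_filter, Finset.sum_const, Pi.smul_apply]
      by_cases hJ : J.card = s + t
      · have hset : (Finset.univ.filter (fun I : Finset ι => I.card = s)).filter (· ⊆ J)
            = J.powersetCard s := by
          ext I
          simp only [Finset.mem_filter, Finset.mem_univ, true_and, Finset.mem_powersetCard]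
          exact and_comm
        rw [hset, Finset.card_powersetCard, hJ]
      · rw [hf J hJ, smul_zero, smul_zero]
    · intro hfZ I hI
      have hbD : b I = kb f I := snd_eq_kb s t f I (a I, b I) (hab I hI)
      have hfD : kD u M f = 0 := by
        have := (Submodule.mem_inf.1 hfZ).2
        exact LinearMap.mem_ker.1 this
      refine Submodule.mem_inf.2 ⟨(hab I hI).2.1, LinearMap.mem_ker.2 ?_⟩
      rw [hbD]
      exact kD_kb u f I hfD

end Stmt16
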